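/- Let A, B ∈ ℍ², let u ∈ T_A ℍ², v ∈ T_B ℍ², A_t = exp_A(tu), B_t = exp_B(tv), and E(t) = (1/2) d(A_t, B_t)². Then E''(0) ≥ ‖u − P v‖², where P v denotes the parallel transport of v along the geodesic segment from B to A. -/

import Mathlib

noncomputable section

/-- The Minkowski bilinear form on `ℝ^{n,1}`. -/
def mink (n : ℕ) (x y : Fin (n+1) → ℝ) : ℝ :=
  (∑ i : Fin n, x i.castSucc * y i.castSucc) - x (Fin.last n) * y (Fin.last n)

/-- Membership in the hyperboloid model of hyperbolic `n`-space. -/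
def IsHyp (n : ℕ) (x : Fin (n+1) → ℝ) : Prop :=
  mink n x x = -1 ∧ 0 < x (Fin.last n)

/-- Tangency to the hyperboloid at `x`. -/
def IsTang (n : ℕ) (x v : Fin (n+1) → ℝ) : Prop := mink n x v = 0

/-- Inverse hyperbolic cosine. -/
def acosh (x : ℝ) : ℝ := Real.log (x + Real.sqrt (x ^ 2 - 1))

/-- Hyperbolic distance in the hyperboloid model: `cosh (dist x y) = -⟨x,y⟩`. -/
def hdist (n : ℕ) (x y : Fin (n+1) → ℝ) : ℝ := acosh (-(mink n x y))

/-- Norm of a tangent vector (the Minkowski form is positive definite on tangent spaces). -/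
def tnorm (n : ℕ) (v : Fin (n+1) → ℝ) : ℝ := Real.sqrt (mink n v v)

/-- The Riemannian exponential map of the hyperboloid. -/
def hexp (n : ℕ) (x v : Fin (n+1) → ℝ) : Fin (n+1) → ℝ :=
  Real.cosh (tnorm n v) • x + (Real.sinh (tnorm n v) / tnorm n v) • v

/-- Unit tangent vector at `x` pointing towards `y`. -/
def hdir (n : ℕ) (x y : Fin (n+1) → ℝ) : Fin (n+1) → ℝ :=
  (Real.sinh (hdist n x y))⁻¹ • (y + (mink n x y) • x)

/-- The inverse exponential map `exp_x⁻¹ (y)`. -/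
def hlog (n : ℕ) (x y : Fin (n+1) → ℝ) : Fin (n+1) → ℝ :=
  hdist n x y • hdir n x y

/-- Parallel transport from `T_y ℍⁿ` to `T_x ℍⁿ` along the geodesic from `y` to `x`. -/
def ptrans (n : ℕ) (x y v : Fin (n+1) → ℝ) : Fin (n+1) → ℝ :=
  v + ((mink n x v) / (1 - mink n x y)) • (x + y)

/-- Minkowski volume form on `ℝ^{2,1}`; `det3 x u w = ‖u‖‖w‖ sin θ` for tangent
vectors `u, w` at `x ∈ ℍ²`, where `θ` is the oriented angle from `u` to `w`. -/
def det3 (a b c : Fin 3 → ℝ) : ℝ :=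
  a 0 * (b 1 * c 2 - b 2 * c 1) - a 1 * (b 0 * c 2 - b 2 * c 0)
    + a 2 * (b 0 * c 1 - b 1 * c 0)

/-- `sinhc x = sinh x / x`, with `sinhc 0 = 1`. -/
def sinhc (x : ℝ) : ℝ := if x = 0 then 1 else Real.sinh x / x


/-! ### Helper lemmas -/

lemma mink_eq (x y : Fin 3 → ℝ) : mink 2 x y = x 0 * y 0 + x 1 * y 1 - x 2 * y 2 := by
  have h : (Fin.last 2) = (2 : Fin 3) := rfl
  rw [mink, Fin.sum_univ_two, h]
  rfl

lemma mink_comm (x y : Fin 3 → ℝ) : mink 2 x y = mink 2 y x := by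
  rw [mink_eq, mink_eq]; ring

def ch (a t : ℝ) : ℝ := Real.cosh (t * a)
def sh (a t : ℝ) : ℝ := if a = 0 then t else Real.sinh (t * a) / a

lemma ch_zero (a : ℝ) : ch a 0 = 1 := by simp [ch]
lemma sh_zero (a : ℝ) : sh a 0 = 0 := by by_cases h : a = 0 <;> simp [sh, h]

lemma hasDerivAt_sh (a t : ℝ) : HasDerivAt (sh a) (ch a t) t := by
  by_cases h : a = 0
  · have hsh : sh a = fun t => t := by funext t; simp [sh, h]
    rw [hsh, ch, h]
    simpa using hasDerivAt_id' t
  · have hsh : sh a = fun t => Real.sinh (t * a) / a := by funext t; simp [sh, h]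
    rw [hsh, ch]
    have h1 : HasDerivAt (fun t : ℝ => Real.sinh (t * a) / a)
        (Real.cosh (t*a) * (1 * a) / a) t :=
      (((hasDerivAt_id t).mul_const a).sinh).div_const a
    convert h1 using 1
    field_simp

lemma hasDerivAt_ch (a t : ℝ) : HasDerivAt (ch a) (a^2 * sh a t) t := by
  by_cases h : a = 0
  · have hch : ch a = fun _ => 1 := by funext t; simp [ch, h]
    rw [hch]
    simpa [h, sh_zero] using (hasDerivAt_const t (1:ℝ))
  · have h1 : HasDerivAt (fun t : ℝ => Real.cosh (t * a)) (Real.sinh (t*a) * (1 * a)) t :=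
      (((hasDerivAt_id t).mul_const a)).cosh
    refine h1.congr_deriv ?_
    simp only [sh, if_neg h]
    field_simp

lemma ch_sq (a t : ℝ) : ch a t ^ 2 = 1 + a^2 * sh a t ^ 2 := by
  by_cases h : a = 0
  · subst h; simp [ch, sh]
  · simp only [ch, sh, if_neg h]
    have := Real.cosh_sq (t * a)
    rw [this]
    field_simp
    ring

lemma one_le_ch (a t : ℝ) : 1 ≤ ch a t := Real.one_le_cosh _

lemma sh_mul (a t : ℝ) : a * sh a t = Real.sinh (t * a) := by
  by_cases h : a = 0 <;> simp [sh, h]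
  field_simp

lemma cosh_acosh {y : ℝ} (hy : 1 ≤ y) : Real.cosh (acosh y) = y := by
  have h1 : 0 ≤ y^2 - 1 := by nlinarith
  have hs := Real.sq_sqrt h1
  have hsn := Real.sqrt_nonneg (y^2-1)
  set s := Real.sqrt (y^2-1)
  have hpos : 0 < y + s := by nlinarith
  rw [acosh, Real.cosh_log hpos]
  have : (y + s)⁻¹ = y - s := by
    rw [inv_eq_iff_eq_inv, eq_comm, inv_eq_iff_eq_inv, eq_comm]
    · rw [eq_comm, inv_eq_one_div, eq_div_iff (by nlinarith)]
      nlinarith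
  rw [this]; ring

lemma sinh_acosh {y : ℝ} (hy : 1 ≤ y) : Real.sinh (acosh y) = Real.sqrt (y^2 - 1) := by
  have h1 : 0 ≤ y^2 - 1 := by nlinarith
  have hs := Real.sq_sqrt h1
  have hsn := Real.sqrt_nonneg (y^2-1)
  set s := Real.sqrt (y^2-1)
  have hpos : 0 < y + s := by nlinarith
  rw [acosh, Real.sinh_log hpos]
  have : (y + s)⁻¹ = y - s := by
    rw [eq_comm, inv_eq_one_div, eq_div_iff (by nlinarith)]
    nlinarith
  rw [this]; ring

lemma acosh_one : acosh 1 = 0 := by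
  simp [acosh]

lemma acosh_nonneg {y : ℝ} (hy : 1 ≤ y) : 0 ≤ acosh y := by
  rw [acosh]
  apply Real.log_nonneg
  nlinarith [Real.sqrt_nonneg (y^2-1)]

lemma acosh_pos {y : ℝ} (hy : 1 < y) : 0 < acosh y := by
  rw [acosh]
  apply Real.log_pos
  nlinarith [Real.sqrt_nonneg (y^2-1)]

lemma hasDerivAt_acosh {y : ℝ} (hy : 1 < y) : HasDerivAt acosh (1 / Real.sqrt (y^2 - 1)) y := by
  have h1 : 0 < y^2 - 1 := by nlinarith
  have hs := Real.sq_sqrt h1.le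
  have hsp : 0 < Real.sqrt (y^2-1) := Real.sqrt_pos.2 h1
  set s := Real.sqrt (y^2-1) with hsdef
  have hinner : HasDerivAt (fun x : ℝ => x + Real.sqrt (x^2-1)) (1 + 2*y/(2*s)) y := by
    have h2 : HasDerivAt (fun x : ℝ => x^2 - 1) (2*y) y := by
      simpa using ((hasDerivAt_pow 2 y).sub_const 1)
    exact (hasDerivAt_id y).add (h2.sqrt (by positivity))
  have hlog : HasDerivAt (fun x : ℝ => Real.log (x + Real.sqrt (x^2-1)))
      ((1 + 2*y/(2*s)) / (y + s)) y := by
    apply hinner.log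
    nlinarith
  have : acosh = fun x : ℝ => Real.log (x + Real.sqrt (x^2-1)) := rfl
  rw [this]
  convert hlog using 1
  field_simp
  nlinarith [hs]

lemma sinh_le_mul_cosh {x : ℝ} (hx : 0 ≤ x) : Real.sinh x ≤ x * Real.cosh x := by
  have hf : ∀ y : ℝ, HasDerivAt (fun z => z * Real.cosh z - Real.sinh z) (y * Real.sinh y) y := by
    intro y
    have := ((hasDerivAt_id y).mul (Real.hasDerivAt_cosh y)).sub (Real.hasDerivAt_sinh y)
    refine this.congr_deriv ?_
    simp only [id_eq]; ring
  have hmono : MonotoneOn (fun z => z * Real.cosh z - Real.sinh z) (Set.Ici 0) := by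
    apply monotoneOn_of_deriv_nonneg (convex_Ici 0)
    · exact (Continuous.continuousOn (by continuity))
    · intro y _
      exact (hf y).differentiableAt.differentiableWithinAt
    · intro y hy
      rw [interior_Ici, Set.mem_Ioi] at hy
      rw [(hf y).deriv]
      have : 0 ≤ Real.sinh y := Real.sinh_nonneg_iff.2 hy.le
      positivity
  have := hmono (Set.self_mem_Ici) (Set.mem_Ici.2 hx) hx
  simp at this
  linarith

lemma posdef (A u : Fin 3 → ℝ) (h1 : mink 2 A A = -1) (h2 : 0 < A 2)
    (h3 : mink 2 A u = 0) : 0 ≤ mink 2 u u ∧ (mink 2 u u = 0 → u = 0) := by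
  rw [mink_eq] at h1 h3 ⊢
  have key : (u 0 * u 0 + u 1 * u 1 - u 2 * u 2) * (A 2 * A 2)
      = (A 0 * u 1 - A 1 * u 0)^2 + u 0 ^2 + u 1 ^2 := by
    linear_combination (-(u 0^2 + u 1^2)) * h1 + (A 0 * u 0 + A 1 * u 1 + A 2 * u 2) * h3
  have hA2 : 0 < A 2 * A 2 := mul_pos h2 h2
  constructor
  · nlinarith [sq_nonneg (A 0 * u 1 - A 1 * u 0), sq_nonneg (u 0), sq_nonneg (u 1)]
  · intro h0
    have h4 : u 0 = 0 ∧ u 1 = 0 := by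
      constructor <;> nlinarith [sq_nonneg (A 0 * u 1 - A 1 * u 0), sq_nonneg (u 0), sq_nonneg (u 1)]
    have h5 : u 2 = 0 := by nlinarith [h4.1, h4.2]
    funext i
    fin_cases i
    · exact h4.1
    · exact h4.2
    · exact h5

lemma cauchy_schwarz (A B : Fin 3 → ℝ) (hA1 : mink 2 A A = -1) (hA2 : 0 < A 2)
    (hB1 : mink 2 B B = -1) (hB2 : 0 < B 2) :
    1 ≤ -(mink 2 A B) ∧ (-(mink 2 A B) = 1 → A = B) := by
  rw [mink_eq] at hA1 hB1 ⊢
  have key : (A 2 * B 2)^2 - (1 + A 0 * B 0 + A 1 * B 1)^2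
      = (A 0 * B 1 - A 1 * B 0)^2 + (A 0 - B 0)^2 + (A 1 - B 1)^2 := by nlinarith [hA1, hB1]
  have hpos : 0 < A 2 * B 2 := mul_pos hA2 hB2
  have hsq : (1 + A 0 * B 0 + A 1 * B 1)^2 ≤ (A 2 * B 2)^2 := by
    nlinarith [sq_nonneg (A 0 * B 1 - A 1 * B 0), sq_nonneg (A 0 - B 0), sq_nonneg (A 1 - B 1)]
  have main : 1 + A 0 * B 0 + A 1 * B 1 ≤ A 2 * B 2 := by
    rcases le_or_gt (1 + A 0 * B 0 + A 1 * B 1) 0 with h | h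
    · linarith
    · nlinarith [hsq, hpos, h]
  constructor
  · linarith
  · intro heq
    have heq' : A 2 * B 2 = 1 + A 0 * B 0 + A 1 * B 1 := by linarith
    have hsum : (A 0 * B 1 - A 1 * B 0)^2 + (A 0 - B 0)^2 + (A 1 - B 1)^2 = 0 := by
      rw [← key, heq']; ring
    have e0 : A 0 = B 0 := by
      have h0 : (A 0 - B 0)^2 = 0 := by
        nlinarith [sq_nonneg (A 0 * B 1 - A 1 * B 0), sq_nonneg (A 1 - B 1), sq_nonneg (A 0 - B 0)]
      have := sq_eq_zero_iff.1 h0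
      linarith
    have e1 : A 1 = B 1 := by
      have h0 : (A 1 - B 1)^2 = 0 := by
        nlinarith [sq_nonneg (A 0 * B 1 - A 1 * B 0), sq_nonneg (A 1 - B 1), sq_nonneg (A 0 - B 0)]
      have := sq_eq_zero_iff.1 h0
      linarith
    have e2 : A 2 = B 2 := by
      have h22 : (A 2 - B 2) * (A 2 + B 2) = 0 := by
        linear_combination hB1 - hA1 + (B 0 + A 0) * e0 + (B 1 + A 1) * e1
      rcases mul_eq_zero.1 h22 with h | h
      · linarith
      · linarith
    funext i
    fin_cases i <;> assumption

lemma hexp_eq (A u : Fin 3 → ℝ) (huu : 0 ≤ mink 2 u u) (hz : mink 2 u u = 0 → u = 0)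
    (t : ℝ) : hexp 2 A (t • u) = fun i => ch (tnorm 2 u) t * A i + sh (tnorm 2 u) t * u i := by
  set α := tnorm 2 u with hα
  have hαnn : 0 ≤ α := Real.sqrt_nonneg _
  have hα2 : α ^ 2 = mink 2 u u := Real.sq_sqrt huu
  by_cases hu0 : u = 0
  · subst hu0
    have hm0 : mink 2 (0 : Fin 3 → ℝ) 0 = 0 := by rw [mink_eq]; simp
    have hα0 : α = 0 := by rw [hα, tnorm, hm0, Real.sqrt_zero]
    have ht0 : t • (0 : Fin 3 → ℝ) = 0 := smul_zero t
    funext i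
    simp [hexp, ht0, tnorm, hm0, ch, hα0]
  · have hupos : 0 < mink 2 u u := lt_of_le_of_ne huu (fun h => hu0 (hz h.symm))
    have hαpos : 0 < α := Real.sqrt_pos.2 hupos
    have hαne : α ≠ 0 := ne_of_gt hαpos
    have htu : mink 2 (t • u) (t • u) = t^2 * mink 2 u u := by
      rw [mink_eq, mink_eq]; simp [Pi.smul_apply, smul_eq_mul]; ring
    have htn : tnorm 2 (t • u) = |t| * α := by
      rw [tnorm, htu, ← hα2]
      rw [show t^2 * α^2 = (|t| * α)^2 by rw [mul_pow, sq_abs]]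
      exact Real.sqrt_sq (by positivity)
    by_cases ht : t = 0
    · subst ht
      have h0 : tnorm 2 ((0:ℝ) • u) = 0 := by rw [htn]; simp
      have h00 : tnorm 2 (0 : Fin 3 → ℝ) = 0 := by
        have : mink 2 (0 : Fin 3 → ℝ) 0 = 0 := by rw [mink_eq]; simp
        rw [tnorm, this, Real.sqrt_zero]
      funext i
      simp [hexp, h0, h00, ch, sh, hαne]
    · funext i
      have habs : |t| * α = |t * α| := by rw [abs_mul, abs_of_nonneg hαnn]
      have hch : Real.cosh (|t| * α) = Real.cosh (t * α) := by rw [habs, Real.cosh_abs]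
      have hsh : Real.sinh (|t| * α) / (|t| * α) * t = Real.sinh (t * α) / α := by
        rcases lt_or_gt_of_ne ht with h | h
        · rw [abs_of_neg h]
          rw [show -t * α = -(t * α) by ring, Real.sinh_neg]
          field_simp
        · rw [abs_of_pos h]
          field_simp
      simp only [hexp, htn, Pi.add_apply, Pi.smul_apply, smul_eq_mul, ch, sh, if_neg hαne]
      rw [hch]
      rw [show Real.sinh (|t| * α) / (|t| * α) * (t * u i) = (Real.sinh (|t| * α) / (|t| * α) * t) * u i by ring, hsh]

def cf (k p q m a b t : ℝ) : ℝ :=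
  k * (ch a t * ch b t) - p * (ch a t * sh b t) - q * (sh a t * ch b t) - m * (sh a t * sh b t)

def cf1 (k p q m a b t : ℝ) : ℝ :=
  k * (a^2 * sh a t * ch b t + b^2 * (ch a t * sh b t))
    - p * (a^2 * sh a t * sh b t + ch a t * ch b t)
    - q * (ch a t * ch b t + b^2 * (sh a t * sh b t))
    - m * (ch a t * sh b t + sh a t * ch b t)

def cf2 (k p q m a b t : ℝ) : ℝ :=
  k * (a^2 * (ch a t * ch b t + b^2 * (sh a t * sh b t))
        + b^2 * (a^2 * (sh a t * sh b t) + ch a t * ch b t))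
    - p * (a^2 * (ch a t * sh b t + sh a t * ch b t)
        + (a^2 * sh a t * ch b t + b^2 * (ch a t * sh b t)))
    - q * ((a^2 * sh a t * ch b t + b^2 * (ch a t * sh b t))
        + b^2 * (ch a t * sh b t + sh a t * ch b t))
    - m * ((a^2 * sh a t * sh b t + ch a t * ch b t)
        + (ch a t * ch b t + b^2 * (sh a t * sh b t)))

lemma hasDerivAt_cf (k p q m a b t : ℝ) :
    HasDerivAt (cf k p q m a b) (cf1 k p q m a b t) t := by
  have h1 := (hasDerivAt_ch a t).mul (hasDerivAt_ch b t)
  have h2 := (hasDerivAt_ch a t).mul (hasDerivAt_sh b t)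
  have h3 := (hasDerivAt_sh a t).mul (hasDerivAt_ch b t)
  have h4 := (hasDerivAt_sh a t).mul (hasDerivAt_sh b t)
  have h := (((h1.const_mul k).sub (h2.const_mul p)).sub (h3.const_mul q)).sub (h4.const_mul m)
  refine h.congr_deriv ?_
  simp only [cf1]; ring

lemma hasDerivAt_cf1 (k p q m a b t : ℝ) :
    HasDerivAt (cf1 k p q m a b) (cf2 k p q m a b t) t := by
  have hca := hasDerivAt_ch a t
  have hcb := hasDerivAt_ch b t
  have hsa := hasDerivAt_sh a t
  have hsb := hasDerivAt_sh b t
  have h1 := ((hsa.const_mul (a^2)).mul hcb).add ((hca.mul hsb).const_mul (b^2))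
  have h2 := ((hsa.const_mul (a^2)).mul hsb).add (hca.mul hcb)
  have h3 := (hca.mul hcb).add ((hsa.mul hsb).const_mul (b^2))
  have h4 := (hca.mul hsb).add (hsa.mul hcb)
  have h := (((h1.const_mul k).sub (h2.const_mul p)).sub (h3.const_mul q)).sub (h4.const_mul m)
  refine h.congr_deriv ?_
  simp only [cf2]; ring

lemma cf_zero (k p q m a b : ℝ) : cf k p q m a b 0 = k := by
  simp [cf, ch_zero, sh_zero]

lemma cf1_zero (k p q m a b : ℝ) : cf1 k p q m a b 0 = -p - q := by
  simp [cf1, ch_zero, sh_zero]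

lemma cf2_zero (k p q m a b : ℝ) : cf2 k p q m a b 0 = k*(a^2+b^2) - 2*m := by
  simp [cf2, ch_zero, sh_zero]; ring

lemma continuous_cf (k p q m a b : ℝ) : Continuous (cf k p q m a b) :=
  continuous_iff_continuousAt.2 fun t => (hasDerivAt_cf k p q m a b t).continuousAt

lemma deriv2_main (k p q m a b : ℝ) (hk : 1 < k) :
    deriv (deriv (fun t => (1/2 : ℝ) * acosh (cf k p q m a b t)^2)) 0
      = ((p+q)^2 * Real.sqrt (k^2-1) + acosh k * (k*(a^2+b^2) - 2*m) * (k^2-1)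
          - acosh k * k * (p+q)^2) / Real.sqrt (k^2-1)^3 := by
  have hk1 : (0:ℝ) < k^2 - 1 := by nlinarith
  set s := Real.sqrt (k^2-1) with hsdef
  have hs2 : s^2 = k^2 - 1 := Real.sq_sqrt hk1.le
  have hs : 0 < s := Real.sqrt_pos.2 hk1
  set c := cf k p q m a b with hcdef
  have hc : ∀ t, HasDerivAt c (cf1 k p q m a b t) t := hasDerivAt_cf k p q m a b
  have hc1 : ∀ t, HasDerivAt (cf1 k p q m a b) (cf2 k p q m a b t) t := hasDerivAt_cf1 k p q m a b
  have hc0 : c 0 = k := cf_zero k p q m a b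
  have hU : ∀ᶠ t in nhds (0:ℝ), 1 < c t := by
    have hmem : c ⁻¹' Set.Ioi 1 ∈ nhds (0:ℝ) :=
      (continuous_cf k p q m a b).continuousAt.preimage_mem_nhds
        (Ioi_mem_nhds (by rw [cf_zero]; exact hk))
    exact Filter.eventually_of_mem hmem fun t ht => ht
  have key : ∀ t, 1 < c t → HasDerivAt (fun t => (1/2 : ℝ) * acosh (c t)^2)
      ((acosh (c t) * cf1 k p q m a b t) * (Real.sqrt ((c t)^2 - 1))⁻¹) t := by
    intro t ht
    have h1 : HasDerivAt (fun x => acosh (c x)) (1/Real.sqrt ((c t)^2-1) * cf1 k p q m a b t) t :=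
      (hasDerivAt_acosh ht).comp t (hc t)
    have h3 := (h1.pow 2).const_mul (1/2 : ℝ)
    refine h3.congr_deriv ?_
    ring
  set e1 := fun t => (acosh (c t) * cf1 k p q m a b t) * (Real.sqrt ((c t)^2 - 1))⁻¹ with he1
  have hEd : deriv (fun t => (1/2 : ℝ) * acosh (c t)^2) =ᶠ[nhds (0:ℝ)] e1 :=
    hU.mono fun t ht => (key t ht).deriv
  rw [Filter.EventuallyEq.deriv_eq hEd]
  -- derivative of e1 at 0
  have hc0' : 1 < c 0 := by rw [hc0]; exact hk
  have hsq0 : Real.sqrt ((c 0)^2 - 1) = s := by rw [hc0]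
  have h1 : HasDerivAt (fun x => acosh (c x)) (1/Real.sqrt ((c 0)^2-1) * cf1 k p q m a b 0) 0 :=
    (hasDerivAt_acosh hc0').comp 0 (hc 0)
  have hinner : HasDerivAt (fun t => (c t)^2 - 1) (2 * c 0 ^ 1 * cf1 k p q m a b 0) 0 :=
    ((hc 0).pow 2).sub_const 1
  have h3 : HasDerivAt (fun t => Real.sqrt ((c t)^2 - 1))
      ((2 * c 0 ^ 1 * cf1 k p q m a b 0) / (2 * Real.sqrt ((c 0)^2 - 1))) 0 :=
    hinner.sqrt (by rw [hc0]; exact ne_of_gt hk1)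
  have h4 : HasDerivAt (fun t => (Real.sqrt ((c t)^2 - 1))⁻¹)
      (-((2 * c 0 ^ 1 * cf1 k p q m a b 0) / (2 * Real.sqrt ((c 0)^2 - 1)))
        / (Real.sqrt ((c 0)^2 - 1))^2) 0 :=
    h3.inv (by rw [hsq0]; exact ne_of_gt hs)
  have h5 := (h1.mul (hc1 0)).mul h4
  rw [show deriv e1 0 = _ from h5.deriv]
  simp only [Pi.mul_apply]
  rw [hsq0, hc0, cf1_zero, cf2_zero]
  have hs3 : s^3 = s * (k^2-1) := by rw [← hs2]; ring
  field_simp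
  linear_combination (acosh k * (k*a^2 + k*b^2 - 2*m)) * hs2

lemma sh_sign {a : ℝ} (ha : 0 ≤ a) {t : ℝ} (ht : t ≠ 0) : 0 < sh a t * t := by
  by_cases h : a = 0
  · simp only [sh, if_pos h]
    rcases lt_or_gt_of_ne ht with h1 | h1
    · exact mul_pos_of_neg_of_neg h1 h1
    · exact mul_pos h1 h1
  · have hap : 0 < a := lt_of_le_of_ne ha (Ne.symm h)
    simp only [sh, if_neg h]
    rcases lt_or_gt_of_ne ht with h1 | h1
    · have hs : Real.sinh (t * a) < 0 := Real.sinh_neg_iff.2 (by nlinarith)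
      exact mul_pos_of_neg_of_neg (div_neg_of_neg_of_pos hs hap) h1
    · have hs : 0 < Real.sinh (t * a) := Real.sinh_pos_iff.2 (by nlinarith)
      exact mul_pos (div_pos hs hap) h1

lemma cf_gt_one {m a b : ℝ} (ha : 0 ≤ a) (hb : 0 ≤ b) (hm1 : m ≤ a*b)
    (hw : 0 < a^2 + b^2 - 2*m) {t : ℝ} (ht : t ≠ 0) : 1 < cf 1 0 0 m a b t := by
  have hSS : 0 < sh a t * sh b t := by
    have h1 := sh_sign ha ht
    have h2 := sh_sign hb ht
    have h3 := mul_pos h1 h2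
    nlinarith [sq_nonneg t]
  have hCa := one_le_ch a t
  have hCb := one_le_ch b t
  have hca := ch_sq a t
  have hcb := ch_sq b t
  have base : 1 + a*b*(sh a t * sh b t) ≤ ch a t * ch b t := by
    nlinarith [sq_nonneg (a * sh a t - b * sh b t), mul_nonneg ha hb,
      mul_pos (lt_of_lt_of_le one_pos hCa) (lt_of_lt_of_le one_pos hCb)]
  rcases lt_or_eq_of_le hm1 with hlt | heq
  · have : 0 < (a*b - m) * (sh a t * sh b t) := mul_pos (by linarith) hSS
    simp only [cf]
    nlinarith
  · -- m = a*b, so a ≠ b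
    have hab : a ≠ b := by
      intro hab'
      subst hab'
      nlinarith [hw, heq]
    have hne : a * sh a t ≠ b * sh b t := by
      rw [sh_mul, sh_mul]
      intro hcontra
      have := Real.sinh_inj.1 hcontra
      exact hab (by
        have : t * a = t * b := this
        field_simp at this
        tauto)
    have hstrict : 0 < (a * sh a t - b * sh b t)^2 :=
      lt_of_le_of_ne (sq_nonneg _) (Ne.symm (pow_ne_zero 2 (sub_ne_zero.2 hne)))
    have base' : 1 + a*b*(sh a t * sh b t) < ch a t * ch b t := by
      nlinarith [mul_pos (lt_of_lt_of_le one_pos hCa) (lt_of_lt_of_le one_pos hCb)]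
    simp only [cf]
    nlinarith

lemma acosh_le {y : ℝ} (hy : 1 ≤ y) : acosh y ≤ (y - 1) + Real.sqrt (y^2 - 1) := by
  have h1 : 0 < y + Real.sqrt (y^2-1) := by nlinarith [Real.sqrt_nonneg (y^2-1)]
  calc acosh y ≤ (y + Real.sqrt (y^2-1)) - 1 := Real.log_le_sub_one_of_pos h1
    _ = (y - 1) + Real.sqrt (y^2 - 1) := by ring

lemma sq_acosh_le {y : ℝ} (hy : 1 ≤ y) : acosh y ^ 2 ≤ 2*(y-1)^2 + 2*(y^2-1) := by
  have h1 : acosh y ^ 2 ≤ ((y-1) + Real.sqrt (y^2-1))^2 :=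
    pow_le_pow_left₀ (acosh_nonneg hy) (acosh_le hy) 2
  have h2 : Real.sqrt (y^2-1)^2 = y^2 - 1 := Real.sq_sqrt (by nlinarith)
  nlinarith [sq_nonneg ((y-1) - Real.sqrt (y^2-1))]

lemma deriv2_degen (m a b : ℝ) (ha : 0 ≤ a) (hb : 0 ≤ b) (hm1 : m ≤ a*b)
    (hw : 0 < a^2 + b^2 - 2*m) :
    deriv (deriv (fun t => (1/2 : ℝ) * acosh (cf 1 0 0 m a b t)^2)) 0
      = a^2 + b^2 - 2*m := by
  set c := cf 1 0 0 m a b with hcdef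
  have hc : ∀ t, HasDerivAt c (cf1 1 0 0 m a b t) t := hasDerivAt_cf 1 0 0 m a b
  have hc1 : ∀ t, HasDerivAt (cf1 1 0 0 m a b) (cf2 1 0 0 m a b t) t := hasDerivAt_cf1 1 0 0 m a b
  have hc0 : c 0 = 1 := cf_zero 1 0 0 m a b
  have hc10 : cf1 1 0 0 m a b 0 = 0 := by rw [cf1_zero]; ring
  have hc20 : cf2 1 0 0 m a b 0 = a^2 + b^2 - 2*m := by rw [cf2_zero]; ring
  have hgt : ∀ t, t ≠ 0 → 1 < c t := fun t ht => cf_gt_one ha hb hm1 hw ht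
  have hge : ∀ t, 1 ≤ c t := by
    intro t
    by_cases ht : t = 0
    · rw [ht, hc0]
    · exact (hgt t ht).le
  set E := fun t => (1/2 : ℝ) * acosh (c t)^2 with hEdef
  have hE0 : E 0 = 0 := by simp [hEdef, hc0, acosh_one]
  have hEnn : ∀ t, 0 ≤ E t := fun t => by positivity
  -- E has derivative 0 at 0
  have hslopec : Filter.Tendsto (slope c 0) (nhdsWithin 0 {(0:ℝ)}ᶜ) (nhds 0) := by
    have := hasDerivAt_iff_tendsto_slope.1 (hc 0)
    rwa [hc10] at this
  have hccont : Filter.Tendsto c (nhdsWithin 0 {(0:ℝ)}ᶜ) (nhds 1) := by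
    have : Filter.Tendsto c (nhds 0) (nhds 1) := by
      have := (continuous_cf 1 0 0 m a b).continuousAt (x := (0:ℝ))
      rwa [ContinuousAt, cf_zero] at this
    exact this.mono_left nhdsWithin_le_nhds
  have hEder0 : HasDerivAt E 0 0 := by
    rw [hasDerivAt_iff_tendsto_slope]
    apply squeeze_zero_norm' (a := fun t => |slope c 0 t| * (2 * c t))
    · filter_upwards [self_mem_nhdsWithin] with t ht
      have ht' : t ≠ 0 := ht
      have h1 : E t ≤ (c t - 1)^2 + ((c t)^2 - 1) := by
        have := sq_acosh_le (hge t)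
        simp only [hEdef]
        linarith
      have h2 : (c t - 1)^2 + ((c t)^2 - 1) = (c t - 1) * (2 * c t) := by ring
      have habs : ‖slope E 0 t‖ = E t / |t| := by
        rw [slope_def_field, hE0, sub_zero, sub_zero, Real.norm_eq_abs, abs_div,
          abs_of_nonneg (hEnn t)]
      rw [habs]
      have : |slope c 0 t| * (2 * c t) = ((c t - 1) * (2 * c t)) / |t| := by
        rw [slope_def_field, hc0, sub_zero, abs_div,
          abs_of_nonneg (by linarith [hge t] : (0:ℝ) ≤ c t - 1)]
        ring
      rw [this]
      exact (div_le_div_iff_of_pos_right (abs_pos.2 ht')).2 (by linarith)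
    · have : Filter.Tendsto (fun t => |slope c 0 t| * (2 * c t)) (nhdsWithin 0 {(0:ℝ)}ᶜ)
          (nhds (|0| * (2 * 1))) := (hslopec.abs).mul (hccont.const_mul 2 |>.congr (fun x => rfl))
      simpa using this
  -- now the second derivative
  have hkey : ∀ t, t ≠ 0 → HasDerivAt E
      ((acosh (c t) * cf1 1 0 0 m a b t) * (Real.sqrt ((c t)^2 - 1))⁻¹) t := by
    intro t ht
    have h1 : HasDerivAt (fun x => acosh (c x)) (1/Real.sqrt ((c t)^2-1) * cf1 1 0 0 m a b t) t :=
      (hasDerivAt_acosh (hgt t ht)).comp t (hc t)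
    have h3 := (h1.pow 2).const_mul (1/2 : ℝ)
    refine h3.congr_deriv ?_
    ring
  have hsuff : HasDerivAt (deriv E) (a^2 + b^2 - 2*m) 0 := by
    rw [hasDerivAt_iff_tendsto_slope]
    have hS : Filter.Tendsto (slope (cf1 1 0 0 m a b) 0) (nhdsWithin 0 {(0:ℝ)}ᶜ)
        (nhds (a^2+b^2-2*m)) := by
      have := hasDerivAt_iff_tendsto_slope.1 (hc1 0)
      rwa [hc20] at this
    -- R tends to 1
    have hacosh_cont : ContinuousAt acosh 1 := by
      have hinner : ContinuousAt (fun x : ℝ => x + Real.sqrt (x^2 - 1)) 1 :=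
        continuousAt_id.add ((Real.continuous_sqrt.comp (by continuity)).continuousAt)
      have hlog : ContinuousAt Real.log ((1:ℝ) + Real.sqrt (1^2 - 1)) := by
        apply Real.continuousAt_log
        norm_num
      exact ContinuousAt.comp hlog hinner
    have hr : Filter.Tendsto (fun t => acosh (c t)) (nhdsWithin 0 {(0:ℝ)}ᶜ)
        (nhdsWithin 0 (Set.Ioi 0)) := by
      apply tendsto_nhdsWithin_of_tendsto_nhds_of_eventually_within
      · have h1 : Filter.Tendsto (fun t => acosh (c t)) (nhdsWithin 0 {(0:ℝ)}ᶜ) (nhds (acosh 1)) :=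
          (hacosh_cont.tendsto).comp hccont
        rwa [acosh_one] at h1
      · filter_upwards [self_mem_nhdsWithin] with t ht
        exact acosh_pos (hgt t ht)
    have hphi : Filter.Tendsto (fun x : ℝ => x * (Real.sinh x)⁻¹) (nhdsWithin 0 (Set.Ioi 0))
        (nhds 1) := by
      have h1 : Filter.Tendsto (slope Real.sinh 0) (nhdsWithin 0 {(0:ℝ)}ᶜ) (nhds 1) := by
        have := hasDerivAt_iff_tendsto_slope.1 (Real.hasDerivAt_sinh 0)
        rwa [Real.cosh_zero] at this
      have h2 : Filter.Tendsto (slope Real.sinh 0) (nhdsWithin 0 (Set.Ioi 0)) (nhds 1) :=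
        h1.mono_left (nhdsWithin_mono 0 (fun x hx => ne_of_gt hx))
      have h3 : Filter.Tendsto (fun x : ℝ => (slope Real.sinh 0 x)⁻¹) (nhdsWithin 0 (Set.Ioi 0))
          (nhds 1) := by
        have := h2.inv₀ (one_ne_zero)
        simpa using this
      apply h3.congr'
      filter_upwards [self_mem_nhdsWithin] with x hx
      rw [slope_def_field]
      have hx0 : x ≠ 0 := ne_of_gt hx
      rw [Real.sinh_zero]
      have hsx : Real.sinh x ≠ 0 := Real.sinh_ne_zero.2 hx0
      field_simp
      ring
    have hR : Filter.Tendsto (fun t => acosh (c t) * (Real.sinh (acosh (c t)))⁻¹)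
        (nhdsWithin 0 {(0:ℝ)}ᶜ) (nhds 1) := hphi.comp hr
    have hR' : Filter.Tendsto (fun t => acosh (c t) * (Real.sqrt ((c t)^2 - 1))⁻¹)
        (nhdsWithin 0 {(0:ℝ)}ᶜ) (nhds 1) := by
      apply hR.congr'
      filter_upwards [self_mem_nhdsWithin] with t ht
      rw [sinh_acosh (hge t)]
    have hprod := hR'.mul hS
    rw [one_mul] at hprod
    apply hprod.congr'
    filter_upwards [self_mem_nhdsWithin] with t ht
    have ht' : t ≠ 0 := ht
    rw [slope_def_field, slope_def_field]
    rw [(hkey t ht').deriv, hEder0.deriv]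
    rw [hc10]
    field_simp
    ring
  rw [hsuff.deriv]

lemma det_mul_det (x y z w : Fin 3 → ℝ) :
    det3 x y z * det3 x y w =
      -( mink 2 x x * (mink 2 y y * mink 2 z w - mink 2 y w * mink 2 z y)
       - mink 2 x y * (mink 2 y x * mink 2 z w - mink 2 y w * mink 2 z x)
       + mink 2 x w * (mink 2 y x * mink 2 z y - mink 2 y y * mink 2 z x) ) := by
  simp only [det3, mink_eq]; ring

set_option maxHeartbeats 2000000 in
lemma final_ineq (k p q m uu vv X Y : ℝ) (hk : 1 < k)
    (hX : X^2 = (k^2-1)*uu - q^2) (hY : Y^2 = (k^2-1)*vv - p^2)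
    (hXY : X*Y = (k^2-1)*m + k*p*q) :
    ((uu + vv - 2*m)*(1+k) - 2*p*q)/(1+k)
      ≤ ((p+q)^2 * Real.sqrt (k^2-1) + acosh k * (k*(uu+vv) - 2*m) * (k^2-1)
          - acosh k * k * (p+q)^2) / Real.sqrt (k^2-1)^3 := by
  have hk1 : (0:ℝ) < k^2 - 1 := by nlinarith
  have hk0 : (0:ℝ) < 1 + k := by linarith
  set d := acosh k with hddef
  set s := Real.sqrt (k^2-1) with hsdef
  have hs2 : s^2 = k^2-1 := Real.sq_sqrt hk1.le
  have hs : 0 < s := Real.sqrt_pos.2 hk1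
  have hd : 0 < d := acosh_pos hk
  have hcosh : Real.cosh d = k := cosh_acosh hk.le
  have hsinh : Real.sinh d = s := sinh_acosh hk.le
  have hds : d ≤ s := by
    rw [← hsinh]; exact Real.self_le_sinh_iff.2 hd.le
  have hdk : s ≤ d * k := by
    rw [← hsinh, ← hcosh]; exact sinh_le_mul_cosh hd.le
  have hdk2 : 2*s ≤ d*(k+1) := by
    have h2 : Real.sinh (2*(d/2)) = 2*Real.sinh (d/2)*Real.cosh (d/2) := Real.sinh_two_mul _
    have h3 : Real.cosh (2*(d/2)) = Real.cosh (d/2)^2 + Real.sinh (d/2)^2 := Real.cosh_two_mul _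
    have h4 := sinh_le_mul_cosh (x := d/2) (by linarith)
    have h5 : (0:ℝ) < Real.cosh (d/2) := Real.cosh_pos _
    have hcs : Real.cosh (d/2)^2 - Real.sinh (d/2)^2 = 1 := Real.cosh_sq_sub_sinh_sq _
    have h6 : 2*(d/2) = d := by ring
    rw [h6] at h2 h3
    rw [hsinh] at h2
    rw [hcosh] at h3
    nlinarith [mul_le_mul_of_nonneg_right h4 h5.le, h2, h3, hcs]
  have huu : uu = (X^2+q^2)/s^2 := by
    rw [hs2]; field_simp; linarith [hX]
  have hvv : vv = (Y^2+p^2)/s^2 := by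
    rw [hs2]; field_simp; linarith [hY]
  have hm : m = (X*Y - k*p*q)/s^2 := by
    rw [hs2]; field_simp; linarith [hXY]
  rw [div_le_div_iff₀ hk0 (by positivity)]
  rw [show (k^2-1:ℝ) = s^2 from hs2.symm, huu, hvv, hm]
  have key : ((p+q)^2 * s + d * (k*((X^2+q^2)/s^2+(Y^2+p^2)/s^2) - 2*((X*Y - k*p*q)/s^2)) * s^2
          - d * k * (p+q)^2) * (1+k)
      - (((X^2+q^2)/s^2 + (Y^2+p^2)/s^2 - 2*((X*Y - k*p*q)/s^2))*(1+k) - 2*p*q) * s^3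
      = (1+k)*(((d*k+d-2*s)/2)*(X-Y)^2 + (d*(k-1)/2)*(X+Y)^2) := by
    field_simp
    linear_combination (4*p*q*s) * hs2
  have n1 : 0 ≤ (d*k+d-2*s)/2 := by linarith
  have n2 : 0 ≤ d*(k-1)/2 := by nlinarith
  have hNn : 0 ≤ (1+k)*(((d*k+d-2*s)/2)*(X-Y)^2 + (d*(k-1)/2)*(X+Y)^2) :=
    mul_nonneg hk0.le (add_nonneg (mul_nonneg n1 (sq_nonneg _)) (mul_nonneg n2 (sq_nonneg _)))
  linarith [key, hNn]

lemma mink_curve (A B u v : Fin 3 → ℝ) (Ca Sa Cb Sb : ℝ) :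
    -(mink 2 (fun i => Ca * A i + Sa * u i) (fun i => Cb * B i + Sb * v i))
      = -(mink 2 A B) * (Ca * Cb) - (mink 2 A v) * (Ca * Sb)
        - (mink 2 u B) * (Sa * Cb) - (mink 2 u v) * (Sa * Sb) := by
  simp only [mink_eq]; ring


/- **Statement 4**: `E''(0) ≥ ‖u - P v‖²` where `P` is parallel transport from `B` to `A`
along the geodesic segment, and `E(t) = ½ d(exp_A(tu), exp_B(tv))²`. Note that
`u - ptrans 2 A B v` is a tangent vector at `A`, so its squared norm is its Minkowski
square `mink 2 w w`. -/
set_option maxHeartbeats 1600000 in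
/-- `E''(0) ≥ ‖u - P v‖²` where `P` is parallel transport from `B` to `A`
along the geodesic segment, and `E(t) = ½ d(exp_A(tu), exp_B(tv))²`. Note that
`u - ptrans 2 A B v` is a tangent vector at `A`, so its squared norm is its Minkowski
square `mink 2 w w`. -/
theorem stmt4 (A B u v : Fin 3 → ℝ)
    (hA : IsHyp 2 A) (hB : IsHyp 2 B)
    (hu : IsTang 2 A u) (hv : IsTang 2 B v) :
    mink 2 (u - ptrans 2 A B v) (u - ptrans 2 A B v)
      ≤ deriv (deriv (fun t : ℝ =>
          (1/2) * (hdist 2 (hexp 2 A (t • u)) (hexp 2 B (t • v))) ^ 2)) 0 := by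
  obtain ⟨hA1, hA2⟩ := hA
  obtain ⟨hB1, hB2⟩ := hB
  have hA2' : 0 < A 2 := hA2
  have hB2' : 0 < B 2 := hB2
  have hu' : mink 2 A u = 0 := hu
  have hv' : mink 2 B v = 0 := hv
  obtain ⟨huu, huz⟩ := posdef A u hA1 hA2' hu'
  obtain ⟨hvv, hvz⟩ := posdef B v hB1 hB2' hv'
  obtain ⟨hk1, hkeq⟩ := cauchy_schwarz A B hA1 hA2' hB1 hB2'
  set α := tnorm 2 u with hα
  set β := tnorm 2 v with hβ
  have hαnn : 0 ≤ α := Real.sqrt_nonneg _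
  have hβnn : 0 ≤ β := Real.sqrt_nonneg _
  have ha2 : α ^ 2 = mink 2 u u := Real.sq_sqrt huu
  have hb2 : β ^ 2 = mink 2 v v := Real.sq_sqrt hvv
  set k := -(mink 2 A B) with hk
  set p := mink 2 A v with hp
  set q := mink 2 u B with hq
  set m := mink 2 u v with hm
  clear_value α β k p q m
  have hABm : mink 2 A B = -k := by rw [hk]; ring
  have hfun : (fun t : ℝ => (1/2 : ℝ) * (hdist 2 (hexp 2 A (t • u)) (hexp 2 B (t • v)))^2)
      = fun t => (1/2 : ℝ) * acosh (cf k p q m α β t)^2 := by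
    funext t
    rw [hexp_eq A u huu huz t, hexp_eq B v hvv hvz t, hdist, mink_curve]
    rw [← hα, ← hβ, ← hk, ← hp, ← hq, ← hm]
    simp only [cf]
  rw [hfun]
  rcases eq_or_lt_of_le hk1 with hdeg | hk2
  · -- degenerate case : k = 1, A = B
    have hk1eq : k = 1 := hdeg.symm
    have hAB : A = B := hkeq hdeg.symm
    have hAv : mink 2 A v = 0 := by rw [hAB]; exact hv'
    have hp0 : p = 0 := by rw [hp]; exact hAv
    have hq0 : q = 0 := by rw [hq, mink_comm, ← hAB]; exact hu'
    have hptrans : ptrans 2 A B v = v := by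
      funext i
      simp [ptrans, hAv]
    rw [hptrans]
    have htang : mink 2 A (u - v) = 0 := by
      rw [mink_eq] at hu' hAv ⊢
      simp only [Pi.sub_apply]
      linarith [hu', hAv]
    obtain ⟨hwnn, hwz⟩ := posdef A (u - v) hA1 hA2' htang
    have hwval : mink 2 (u - v) (u - v) = α^2 + β^2 - 2*m := by
      have hm' : m = mink 2 u v := hm
      rw [mink_eq] at hm' ⊢
      rw [mink_eq] at ha2 hb2
      simp only [Pi.sub_apply]
      linear_combination -ha2 - hb2 + 2*hm'
    rw [hk1eq, hp0, hq0]
    rcases eq_or_lt_of_le hwnn with hw0 | hwpos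
    · -- u = v
      have huv : u = v := sub_eq_zero.1 (hwz hw0.symm)
      have hβα : β = α := by rw [hβ, hα, huv]
      have hm2 : m = α^2 := by
        rw [hm, huv, ← hb2, hβα]
      have hconst : (fun t => (1/2 : ℝ) * acosh (cf 1 0 0 m α β t)^2) = fun _ => (0:ℝ) := by
        funext t
        have hcf1 : cf 1 0 0 m α β t = 1 := by
          simp only [cf]
          rw [hm2, hβα]
          linear_combination ch_sq α t
        rw [hcf1, acosh_one]
        norm_num
      rw [hconst]
      have hLHS : mink 2 (u - v) (u - v) = 0 := by rw [← hw0]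
      rw [hLHS]
      simp
    · -- w > 0 : use degenerate second derivative
      have hwpos' : 0 < α^2 + β^2 - 2*m := by rw [← hwval]; exact hwpos
      -- Cauchy-Schwarz on the tangent plane : m ≤ α β
      have hm1 : m ≤ α * β := by
        have htang2 : mink 2 A (β • u - α • v) = 0 := by
          rw [mink_eq] at hu' hAv ⊢
          simp only [Pi.sub_apply, Pi.smul_apply, smul_eq_mul]
          nlinarith [hu', hAv]
        obtain ⟨hcs1, _⟩ := posdef A (β • u - α • v) hA1 hA2' htang2
        have hexp2 : mink 2 (β • u - α • v) (β • u - α • v)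
            = β^2*(mink 2 u u) - 2*α*β*(mink 2 u v) + α^2*(mink 2 v v) := by
          simp only [mink_eq, Pi.sub_apply, Pi.smul_apply, smul_eq_mul]
          ring
        rw [hexp2, ← ha2, ← hb2, ← hm] at hcs1
        rcases (mul_nonneg hαnn hβnn).eq_or_lt with hab0 | habpos
        · -- α β = 0 : one of u, v is zero hence m = 0
          rcases mul_eq_zero.1 (by linarith : α * β = 0) with h0 | h0
          · have hu0 : u = 0 := by
              apply huz
              rw [← ha2, h0]
              norm_num
            have hm0 : m = 0 := by rw [hm, hu0, mink_eq]; simp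
            rw [hm0]
            exact mul_nonneg hαnn hβnn
          · have hv0 : v = 0 := by
              apply hvz
              rw [← hb2, h0]
              norm_num
            have hm0 : m = 0 := by rw [hm, hv0, mink_eq]; simp
            rw [hm0]
            exact mul_nonneg hαnn hβnn
        · nlinarith [hcs1, habpos]
      rw [deriv2_degen m α β hαnn hβnn hm1 hwpos']
      exact le_of_eq hwval
  · -- main case : 1 < k
    rw [deriv2_main k p q m α β hk2]
    have hk0 : (0:ℝ) < 1 + k := by linarith
    have hne : (1:ℝ) + k ≠ 0 := ne_of_gt hk0
    set lam := mink 2 A v / (1 - mink 2 A B) with hlam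
    clear_value lam
    have hlam1 : lam * (1 + k) = p := by
      rw [hlam, hABm, hp, show (1 : ℝ) - -k = 1 + k by ring]
      exact div_mul_cancel₀ _ hne
    have hbil : mink 2 (u - ptrans 2 A B v) (u - ptrans 2 A B v)
        = mink 2 u u + mink 2 v v - 2*(mink 2 u v)
          - 2*lam*(mink 2 A u + mink 2 u B) + 2*lam*(mink 2 A v + mink 2 B v)
          + lam^2*(mink 2 A A + mink 2 B B + 2*(mink 2 A B)) := by
      have hpt : ∀ i : Fin 3, (u - ptrans 2 A B v) i = u i - v i - lam * (A i + B i) := by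
        intro i
        rw [hlam]
        simp only [ptrans, Pi.sub_apply, Pi.add_apply, Pi.smul_apply, smul_eq_mul]
        ring
      rw [mink_eq, hpt 0, hpt 1, hpt 2]
      simp only [mink_eq]
      ring
    have hE1 : mink 2 (u - ptrans 2 A B v) (u - ptrans 2 A B v)
        = ((α^2 + β^2 - 2*m)*(1+k) - 2*p*q)/(1+k) := by
      rw [hbil, hu', hv', hA1, hB1, hABm, ← ha2, ← hb2, ← hm, ← hp, ← hq]
      rw [eq_div_iff hne]
      linear_combination (-2*q - 2*lam*(1+k)) * hlam1
    rw [hE1]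
    -- the determinant identities
    have huA : mink 2 u A = 0 := by rw [mink_comm]; exact hu'
    have hvB : mink 2 v B = 0 := by rw [mink_comm]; exact hv'
    have hvA : mink 2 v A = p := by rw [mink_comm, ← hp]
    have hBA : mink 2 B A = -k := by rw [mink_comm]; exact hABm
    have hBu : mink 2 B u = q := by rw [mink_comm, ← hq]
    have hAv2 : mink 2 A v = p := hp.symm
    have hBv2 : mink 2 B v = 0 := hv'
    have huv2 : mink 2 u v = m := hm.symm
    have huB : mink 2 u B = q := hq.symm
    have hX : (det3 A B u)^2 = (k^2-1)*α^2 - q^2 := by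
      have h := det_mul_det A B u u
      rw [hA1, hB1, hABm, hBA, hu', huA, hBu, huB, ← ha2] at h
      rw [pow_two]
      linear_combination h
    have hY : (det3 A B v)^2 = (k^2-1)*β^2 - p^2 := by
      have h := det_mul_det A B v v
      rw [hA1, hB1, hABm, hBA, hAv2, hBv2, hvB, hvA, ← hb2] at h
      rw [pow_two]
      linear_combination h
    have hXY : (det3 A B u) * (det3 A B v) = (k^2-1)*m + k*p*q := by
      have h := det_mul_det A B u v
      rw [hA1, hB1, hABm, hBA, hAv2, hBv2, huA, huB, huv2] at h
      linear_combination h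
    exact final_ineq k p q m (α^2) (β^2) (det3 A B u) (det3 A B v) hk2 hX hY hXY
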